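/- Let t be an n-ary idempotent polymorphism of the digraph D. Then the major subsets for t form a filter of the lattice of subsets of {1,…,n}: the full set {1,…,n} is major, every superset of a major subset is major, and the intersection of two major subsets is major. -/
import Mathlib


namespace DigraphHM12

/-- `f` is a polymorphism of the digraph `(V, E)`. -/
def IsPoly {V : Type*} (E : V → V → Prop) {n : ℕ} (f : (Fin n → V) → V) : Prop :=
  ∀ a b : Fin n → V, (∀ i, E (a i) (b i)) → E (f a) (f b)

/-- `f` is idempotent. -/
def IsIdem {V : Type*} {n : ℕ} (f : (Fin n → V) → V) : Prop :=
  ∀ x : V, f (fun _ => x) = x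

/-- The reflexive digraph `D` on `{0,1,2}` with non-loop edges
`0 → 1`, `1 → 0`, `1 → 2`, `2 → 0`. -/
def DEdge : Fin 3 → Fin 3 → Prop := fun a b =>
  a = b ∨ (a = 0 ∧ b = 1) ∨ (a = 1 ∧ b = 0) ∨ (a = 1 ∧ b = 2) ∨ (a = 2 ∧ b = 0)

/-- `I` is a major subset for `t`: there is a tuple `c` with `t(c) = 2` whose set of
coordinates equal to `2` is exactly `I`. -/
def IsMajor {n : ℕ} (t : (Fin n → Fin 3) → Fin 3) (I : Finset (Fin n)) : Prop :=
  ∃ c : Fin n → Fin 3, t c = 2 ∧ I = Finset.univ.filter (fun i => c i = 2)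

instance : DecidableRel DEdge := fun a b => by unfold DEdge; infer_instance

/-- Sandwich lemma: the in-neighbors of `2` are `{1,2}` and out-neighbors are `{0,2}`, so
any tuple pointwise between two tuples of value `2` has value `2`. -/
lemma sandwich {n : ℕ} {t : (Fin n → Fin 3) → Fin 3} (hpoly : IsPoly DEdge t)
    {a b e : Fin n → Fin 3} (ha : t a = 2) (hb : t b = 2)
    (h1 : ∀ i, DEdge (a i) (e i)) (h2 : ∀ i, DEdge (e i) (b i)) : t e = 2 := by
  have H1 := hpoly a e h1
  have H2 := hpoly e b h2
  rw [ha] at H1; rw [hb] at H2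
  revert H1 H2
  generalize t e = x
  revert x; decide

/-- The major subsets for an idempotent polymorphism of `D` form a filter of the lattice
of subsets of `{1,…,n}`: the full set is major, supersets of major subsets are major,
and intersections of major subsets are major. -/
theorem majors_form_filter {n : ℕ}
    (t : (Fin n → Fin 3) → Fin 3) (hpoly : IsPoly DEdge t) (hidem : IsIdem t) :
    IsMajor t Finset.univ ∧
      (∀ I J : Finset (Fin n), IsMajor t I → I ⊆ J → IsMajor t J) ∧
      (∀ I J : Finset (Fin n), IsMajor t I → IsMajor t J → IsMajor t (I ∩ J)) := by
  classical
  have e1x : ∀ x : Fin 3, DEdge 1 x := by decide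
  have ex0 : ∀ x : Fin 3, DEdge x 0 := by decide
  have exx : ∀ x : Fin 3, DEdge x x := by decide
  have ex1 : ∀ x : Fin 3, x ≠ 2 → DEdge x 1 := by decide
  have e0x : ∀ x : Fin 3, x ≠ 2 → DEdge 0 x := by decide
  have e22 : DEdge 2 2 := by decide
  have e20 : DEdge 2 0 := by decide
  have e12 : DEdge 1 2 := by decide
  have e00 : DEdge 0 0 := by decide
  refine ⟨⟨fun _ => 2, hidem 2, by simp⟩, ?_, ?_⟩
  · rintro I J ⟨c, hc, rfl⟩ hIJ
    have hmemJ : ∀ i, c i = 2 → i ∈ J := fun i hi => hIJ (by simp [hi])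
    set h : Fin n → Fin 3 := fun i => if c i = 2 then 2 else if i ∈ J then 1 else 0 with hh
    set f : Fin n → Fin 3 := fun i => if c i = 2 then 2 else 0 with hf
    set e : Fin n → Fin 3 := fun i => if i ∈ J then 2 else 0 with he
    have th : t h = 2 := by
      refine sandwich hpoly hc hc (fun i => ?_) (fun i => ?_) <;>
        by_cases h1 : c i = 2 <;> by_cases h2 : i ∈ J <;>
          simp only [hh, h1, h2, if_true, if_false, if_pos, if_neg, not_false_iff]
      · exact exx _
      · exact e22
      · exact ex1 _ h1
      · exact ex0 _
      · exact exx _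
      · exact e22
      · exact e1x _
      · exact e0x _ h1
    have tf : t f = 2 := by
      refine sandwich hpoly hc hc (fun i => ?_) (fun i => ?_) <;>
        by_cases h1 : c i = 2 <;>
          simp only [hf, h1, if_true, if_false]
      · exact e22
      · exact ex0 _
      · exact e22
      · exact e0x _ h1
    have te : t e = 2 := by
      refine sandwich hpoly th tf (fun i => ?_) (fun i => ?_) <;>
        by_cases h2 : i ∈ J
      · have : c i = 2 ∨ c i ≠ 2 := em _
        rcases this with h1 | h1 <;>
          simp only [hh, he, h1, h2, if_true, if_false]
        · exact e22
        · exact e12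
      · have h1 : c i ≠ 2 := fun hci => h2 (hmemJ i hci)
        simp only [hh, he, h1, h2, if_false]
        exact e00
      · have : c i = 2 ∨ c i ≠ 2 := em _
        rcases this with h1 | h1 <;>
          simp only [hf, he, h1, h2, if_true, if_false]
        · exact e22
        · exact e20
      · have h1 : c i ≠ 2 := fun hci => h2 (hmemJ i hci)
        simp only [hf, he, h1, h2, if_false]
        exact e00
    refine ⟨e, te, ?_⟩
    ext i
    by_cases h2 : i ∈ J <;> simp [he, h2]
  · rintro I J ⟨c, hc, rfl⟩ ⟨c', hc', rfl⟩
    set a : Fin n → Fin 3 := fun i => if c i = 2 then 2 else 0 with ha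
    set b : Fin n → Fin 3 := fun i => if c' i = 2 then 2 else 0 with hb
    set e : Fin n → Fin 3 :=
      fun i => if c i = 2 ∧ c' i = 2 then 2 else if c' i = 2 then 1 else 0 with he
    have ta : t a = 2 := by
      refine sandwich hpoly hc hc (fun i => ?_) (fun i => ?_) <;>
        by_cases h1 : c i = 2 <;> simp only [ha, h1, if_true, if_false]
      · exact e22
      · exact ex0 _
      · exact e22
      · exact e0x _ h1
    have tb : t b = 2 := by
      refine sandwich hpoly hc' hc' (fun i => ?_) (fun i => ?_) <;>
        by_cases h1 : c' i = 2 <;> simp only [hb, h1, if_true, if_false]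
      · exact e22
      · exact ex0 _
      · exact e22
      · exact e0x _ h1
    have te : t e = 2 := by
      refine sandwich hpoly ta tb (fun i => ?_) (fun i => ?_) <;>
        by_cases h1 : c i = 2 <;> by_cases h2 : c' i = 2 <;>
          simp only [ha, hb, he, h1, h2, if_true, if_false, and_true, and_false,
            true_and, false_and, not_false_iff]
      · exact e22
      · exact e20
      · exact e0x _ (by decide)
      · exact e00
      · exact e22
      · exact ex0 _
      · exact e12
      · exact e00
    refine ⟨e, te, ?_⟩
    ext i
    by_cases h1 : c i = 2 <;> by_cases h2 : c' i = 2 <;>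
      simp [he, h1, h2]
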